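/- Let C be a compact proper subset of S³ (the unit sphere in euclidean ℝ⁴), and let U ⊆ S³ be a nonempty open set. Then there exists a self-homeomorphism h : S³ → S³ such that h(C) ⊆ U. -/

import Mathlib

noncomputable section


open Metric Filter Set Topology
open scoped Classical

noncomputable section SphereAux

variable {E : Type*} [NormedAddCommGroup E] [InnerProductSpace ℝ E] [FiniteDimensional ℝ E]

variable (p : Metric.sphere (0:E) 1)

/-- The target plane of stereographic projection from `p`. -/
abbrev sphF : Type _ := ↥((ℝ ∙ (p:E))ᗮ)

/-- Conjugate a homeomorphism of the plane by stereographic projection, fixing `p`. -/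
def sphMap (f : sphF p → sphF p) (x : Metric.sphere (0:E) 1) : Metric.sphere (0:E) 1 :=
  if x = p then p
  else (stereographic (norm_eq_of_mem_sphere p)).symm
    (f (stereographic (norm_eq_of_mem_sphere p) x))

theorem north_pole_eq : (⟨(p:E), by simp⟩ : Metric.sphere (0:E) 1) = p := Subtype.ext rfl

theorem sphMap_apply_of_ne (f : sphF p → sphF p) {x : Metric.sphere (0:E) 1} (hx : x ≠ p) :
    sphMap p f x = (stereographic (norm_eq_of_mem_sphere p)).symm
      (f (stereographic (norm_eq_of_mem_sphere p) x)) := if_neg hx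

theorem stereo_symm_ne (w : sphF p) :
    (stereographic (norm_eq_of_mem_sphere p)).symm w ≠ p := by
  have := stereoInvFun_ne_north_pole (norm_eq_of_mem_sphere p) w
  rwa [north_pole_eq] at this

theorem stereo_left_inv' {x : Metric.sphere (0:E) 1} (hx : x ≠ p) :
    (stereographic (norm_eq_of_mem_sphere p)).symm
      (stereographic (norm_eq_of_mem_sphere p) x) = x := by
  apply (stereographic (norm_eq_of_mem_sphere p)).left_inv
  rw [stereographic_source, north_pole_eq]
  exact hx

theorem stereo_right_inv' (w : sphF p) :
    stereographic (norm_eq_of_mem_sphere p)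
      ((stereographic (norm_eq_of_mem_sphere p)).symm w) = w :=
  (stereographic (norm_eq_of_mem_sphere p)).right_inv (by simp [stereographic_target])

theorem sphMap_ne (f : sphF p → sphF p) {x : Metric.sphere (0:E) 1} (hx : x ≠ p) :
    sphMap p f x ≠ p := by
  rw [sphMap_apply_of_ne p f hx]; exact stereo_symm_ne p _

theorem sphMap_leftInv (f : sphF p ≃ sphF p) (x : Metric.sphere (0:E) 1) :
    sphMap p f.symm (sphMap p f x) = x := by
  by_cases hx : x = p
  · simp [hx, sphMap]
  · rw [sphMap_apply_of_ne p f hx, sphMap_apply_of_ne p f.symm (stereo_symm_ne p _),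
      stereo_right_inv', Equiv.symm_apply_apply, stereo_left_inv' p hx]

/-- Estimate: the inverse of stereographic projection tends to `p` at infinity. -/
theorem stereo_symm_tendsto :
    Tendsto (stereographic (norm_eq_of_mem_sphere p)).symm (cocompact (sphF p)) (𝓝 p) := by
  set v := (p : E) with hv'
  have hv : ‖v‖ = 1 := norm_eq_of_mem_sphere p
  rw [tendsto_iff_dist_tendsto_zero]
  have key : ∀ w : sphF p, ‖(w:E)‖ ≥ 1 →
      dist ((stereographic (norm_eq_of_mem_sphere p)).symm w) p ≤ 12 / ‖(w:E)‖ := by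
    intro w hw
    have hwpos : (0:ℝ) < ‖(w:E)‖ := lt_of_lt_of_le one_pos hw
    have hpos : (0:ℝ) < ‖(w:E)‖^2 + 4 := by positivity
    have hdiff : (((stereographic (norm_eq_of_mem_sphere p)).symm w : E)) - v
        = (‖(w:E)‖^2 + 4)⁻¹ • ((4:ℝ) • (w:E) - (8:ℝ) • v) := by
      show stereoInvFunAux v (w:E) - v = _
      rw [stereoInvFunAux_apply]
      match_scalars
      · ring
      · field_simp
        ring
    have h1 : dist ((stereographic (norm_eq_of_mem_sphere p)).symm w) p
        = ‖(((stereographic (norm_eq_of_mem_sphere p)).symm w : E)) - v‖ := by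
      rw [Subtype.dist_eq, dist_eq_norm]
    rw [h1, hdiff, norm_smul]
    have h2 : ‖(4:ℝ) • (w:E) - (8:ℝ) • v‖ ≤ 4 * ‖(w:E)‖ + 8 := by
      calc ‖(4:ℝ) • (w:E) - (8:ℝ) • v‖ ≤ ‖(4:ℝ) • (w:E)‖ + ‖(8:ℝ) • v‖ := norm_sub_le _ _
      _ = 4 * ‖(w:E)‖ + 8 := by simp [norm_smul, hv]
    have h3 : ‖(‖(w:E)‖^2 + 4)⁻¹‖ = (‖(w:E)‖^2 + 4)⁻¹ := by
      rw [Real.norm_eq_abs, abs_of_pos (inv_pos.mpr hpos)]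
    rw [h3]
    calc (‖(w:E)‖^2 + 4)⁻¹ * ‖(4:ℝ) • (w:E) - (8:ℝ) • v‖
        ≤ (‖(w:E)‖^2 + 4)⁻¹ * (4 * ‖(w:E)‖ + 8) := by
          exact mul_le_mul_of_nonneg_left h2 (inv_nonneg.mpr hpos.le)
      _ ≤ 12 / ‖(w:E)‖ := by
          have heq : (‖(w:E)‖^2 + 4)⁻¹ * (4 * ‖(w:E)‖ + 8)
              = (4 * ‖(w:E)‖ + 8) / (‖(w:E)‖^2 + 4) := by ring
          rw [heq, div_le_div_iff₀ hpos hwpos]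
          nlinarith
  have hnorm : Tendsto (fun w : sphF p => ‖(w:E)‖) (cocompact (sphF p)) atTop := by
    have : Tendsto (fun w : sphF p => ‖w‖) (cocompact (sphF p)) atTop :=
      tendsto_norm_cocompact_atTop
    simpa [Submodule.coe_norm] using this
  have hbound : Tendsto (fun w : sphF p => 12 / ‖(w:E)‖) (cocompact (sphF p)) (𝓝 0) :=
    tendsto_const_nhds.div_atTop hnorm
  refine squeeze_zero' ?_ ?_ hbound
  · filter_upwards with w using dist_nonneg
  · filter_upwards [hnorm.eventually_ge_atTop 1] with w hw using key w hw

theorem stereo_tendsto_cocompact :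
    Tendsto (stereographic (norm_eq_of_mem_sphere p)) (𝓝[≠] p) (cocompact (sphF p)) := by
  rw [hasBasis_cocompact.tendsto_right_iff]
  intro K hK
  have hA : IsCompact ((stereographic (norm_eq_of_mem_sphere p)).symm '' K) :=
    hK.image (continuous_stereoInvFun (norm_eq_of_mem_sphere p))
  have hpA : p ∉ (stereographic (norm_eq_of_mem_sphere p)).symm '' K := by
    rintro ⟨w, -, hw⟩
    exact stereo_symm_ne p w hw
  have hmem : ((stereographic (norm_eq_of_mem_sphere p)).symm '' K)ᶜ ∈ 𝓝 p :=
    hA.isClosed.isOpen_compl.mem_nhds hpA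
  filter_upwards [nhdsWithin_le_nhds hmem, self_mem_nhdsWithin] with x hx hx'
  intro hxK
  exact hx ⟨_, hxK, stereo_left_inv' p hx'⟩

theorem continuous_sphMap (f : sphF p ≃ₜ sphF p) : Continuous (sphMap p f) := by
  rw [continuous_iff_continuousAt]
  intro x
  by_cases hx : x = p
  · rw [hx, ← continuousWithinAt_compl_self]
    have hf : Tendsto f (cocompact (sphF p)) (cocompact (sphF p)) := f.map_cocompact.le
    have h1 : Tendsto (fun x => (stereographic (norm_eq_of_mem_sphere p)).symm
        (f (stereographic (norm_eq_of_mem_sphere p) x))) (𝓝[≠] p) (𝓝 p) :=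
      (stereo_symm_tendsto p).comp (hf.comp (stereo_tendsto_cocompact p))
    have h2 : Tendsto (sphMap p f) (𝓝[≠] p) (𝓝 p) := by
      refine h1.congr' ?_
      filter_upwards [self_mem_nhdsWithin] with y hy
      exact (sphMap_apply_of_ne p f hy).symm
    simpa [ContinuousWithinAt, sphMap] using h2
  · have hmem : {p}ᶜ ∈ 𝓝 x := isOpen_compl_singleton.mem_nhds hx
    have hco : ContinuousOn (fun x => (stereographic (norm_eq_of_mem_sphere p)).symm
        (f (stereographic (norm_eq_of_mem_sphere p) x))) {p}ᶜ := by
      intro y hy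
      have hσ : ContinuousOn (stereographic (norm_eq_of_mem_sphere p)) {p}ᶜ := by
        have := (stereographic (norm_eq_of_mem_sphere p)).continuousOn
        rwa [stereographic_source, north_pole_eq] at this
      exact (((continuous_stereoInvFun (norm_eq_of_mem_sphere p)).comp
        f.continuous).continuousAt).comp_continuousWithinAt (hσ y hy)
    have := hco.continuousAt hmem
    refine this.congr ?_
    filter_upwards [hmem] with y hy
    exact (sphMap_apply_of_ne p f hy).symm

/-- The sphere self-homeomorphism induced by a homeomorphism of the stereographic plane. -/
def sphHomeo (f : sphF p ≃ₜ sphF p) : Metric.sphere (0:E) 1 ≃ₜ Metric.sphere (0:E) 1 :=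
  Continuous.homeoOfEquivCompactToT2 (f := {
    toFun := sphMap p f
    invFun := sphMap p f.symm
    left_inv := fun x => by
      have := sphMap_leftInv p f.toEquiv x
      simpa using this
    right_inv := fun x => by
      have := sphMap_leftInv p f.symm.toEquiv x
      simpa using this }) (continuous_sphMap p f)

theorem sphHomeo_apply_of_ne (f : sphF p ≃ₜ sphF p) {x : Metric.sphere (0:E) 1} (hx : x ≠ p) :
    sphHomeo p f x = (stereographic (norm_eq_of_mem_sphere p)).symm
      (f (stereographic (norm_eq_of_mem_sphere p) x)) := sphMap_apply_of_ne p f hx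

end SphereAux

/-- The unit sphere in euclidean `ℝ⁴`. -/
abbrev S3 : Set (EuclideanSpace ℝ (Fin 4)) := Metric.sphere 0 1


/-- Any compact proper subset of `S³` can be moved into any nonempty open subset of `S³`
by a self-homeomorphism of `S³`. -/
theorem exists_homeomorph_image_subset_of_isCompact_ne_univ
    (C : Set ↥S3) (hC : IsCompact C) (hCne : C ≠ Set.univ)
    (U : Set ↥S3) (hU : IsOpen U) (hUne : U.Nonempty) :
    ∃ h : ↥S3 ≃ₜ ↥S3, h '' C ⊆ U := by
  classical
  obtain ⟨p, hpC⟩ : ∃ p : ↥S3, p ∉ C := by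
    by_contra hcon; push_neg at hcon; exact hCne (Set.eq_univ_iff_forall.2 hcon)
  -- find a point of `U` different from `p`
  have hrank : 1 < Module.rank ℝ (EuclideanSpace ℝ (Fin 4)) := by
    rw [← Module.finrank_eq_rank]
    simp only [finrank_euclideanSpace_fin]
    norm_cast
  have hpre : PreconnectedSpace ↥S3 :=
    Subtype.preconnectedSpace (isPreconnected_sphere hrank 0 1)
  obtain ⟨q, hqU, hqp⟩ : ∃ q, q ∈ U ∧ q ≠ p := by
    by_contra hcon
    push_neg at hcon
    obtain ⟨q0, hq0⟩ := hUne
    have hq0p : q0 = p := hcon q0 hq0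
    have hUeq : U = {p} := subset_antisymm (fun x hx => hcon x hx) (fun x hx => by
      rw [Set.mem_singleton_iff] at hx; rw [hx, ← hq0p]; exact hq0)
    have hclopen : IsClopen ({p} : Set ↥S3) := ⟨isClosed_singleton, hUeq ▸ hU⟩
    have huniv : ({p} : Set ↥S3) = Set.univ := hclopen.eq_univ ⟨p, rfl⟩
    have hmem : (⟨-(p : EuclideanSpace ℝ (Fin 4)), by simpa using p.2⟩ : ↥S3)
        ∈ ({p} : Set ↥S3) := huniv ▸ Set.mem_univ _
    rw [Set.mem_singleton_iff] at hmem
    have hval : -(p : EuclideanSpace ℝ (Fin 4)) = (p : EuclideanSpace ℝ (Fin 4)) :=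
      congrArg Subtype.val hmem
    rw [neg_eq_iff_add_eq_zero, ← two_smul ℝ, smul_eq_zero, or_iff_right two_ne_zero] at hval
    have : ‖(p : EuclideanSpace ℝ (Fin 4))‖ = 1 := norm_eq_of_mem_sphere p
    rw [hval] at this
    simp at this
  -- stereographic projection from p
  have hσcont : ContinuousOn (stereographic (norm_eq_of_mem_sphere p)) {p}ᶜ := by
    have := (stereographic (norm_eq_of_mem_sphere p)).continuousOn
    rwa [stereographic_source, north_pole_eq] at this
  set c := stereographic (norm_eq_of_mem_sphere p) q with hcdef
  have hsymmq : (stereographic (norm_eq_of_mem_sphere p)).symm c = q := stereo_left_inv' p hqp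
  have hW : (stereographic (norm_eq_of_mem_sphere p)).symm ⁻¹' U ∈ 𝓝 c :=
    ((continuous_stereoInvFun (norm_eq_of_mem_sphere p)).continuousAt).preimage_mem_nhds
      (hU.mem_nhds (show (stereographic (norm_eq_of_mem_sphere p)).symm c ∈ U by
        rw [hsymmq]; exact hqU))
  obtain ⟨r, hr, hball⟩ := Metric.mem_nhds_iff.1 hW
  have hCsub : C ⊆ {p}ᶜ := fun x hx h => hpC (h ▸ hx)
  have hK : IsCompact (stereographic (norm_eq_of_mem_sphere p) '' C) :=
    hC.image_of_continuousOn (hσcont.mono hCsub)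
  obtain ⟨R, hRK⟩ := hK.isBounded.subset_closedBall 0
  set R' : ℝ := max R 1 with hR'def
  have hR'1 : (1:ℝ) ≤ R' := le_max_right _ _
  have hR'0 : (0:ℝ) < R' := lt_of_lt_of_le one_pos hR'1
  set t : ℝ := r / (2 * R') with htdef
  have ht : 0 < t := by positivity
  set f : sphF p ≃ₜ sphF p :=
    (Homeomorph.smulOfNeZero t ht.ne').trans (Homeomorph.addLeft c) with hfdef
  have hfapp : ∀ w : sphF p, f w = c + t • w := fun w => rfl
  refine ⟨sphHomeo p f, ?_⟩
  rintro _ ⟨x, hxC, rfl⟩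
  have hxp : x ≠ p := hCsub hxC
  rw [sphHomeo_apply_of_ne p f hxp]
  apply hball
  rw [hfapp]
  have h1 : ‖stereographic (norm_eq_of_mem_sphere p) x‖ ≤ R' := by
    have hmem : stereographic (norm_eq_of_mem_sphere p) x ∈ Metric.closedBall 0 R :=
      hRK ⟨x, hxC, rfl⟩
    rw [Metric.mem_closedBall, dist_zero_right] at hmem
    exact hmem.trans (le_max_left _ _)
  rw [Metric.mem_ball, dist_eq_norm, add_sub_cancel_left, norm_smul, Real.norm_eq_abs,
    abs_of_pos ht]
  calc t * ‖stereographic (norm_eq_of_mem_sphere p) x‖ ≤ t * R' :=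
        mul_le_mul_of_nonneg_left h1 ht.le
    _ = r / 2 := by rw [htdef]; field_simp
    _ < r := by linarith
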